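/- arXiv:2312.08293 — 3 statements merged into one kernel-verified Lean document; each statement's English description precedes it below -/
import Mathlib

section
/- The sigmoid function φ(ν) = 1/(1 + e^{−ν}) satisfies the offset sector [0, 1/4] around the point (ν*, φ(ν*)) = (0, 1/2): for all ν ∈ ℝ, ((1/2 − φ(ν)) − 0·(0 − ν))·((1/4)(0 − ν) − (1/2 − φ(ν))) ≥ 0. -/
lemma sigmoid_key : ∀ x : ℝ, 0 ≤ x → 2 - x ≤ Real.exp (-x) * (2 + x) := by
  have hmono : MonotoneOn (fun x : ℝ => Real.exp (-x) * (2 + x) + x) (Set.Ici 0) := by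
    have hf : Differentiable ℝ (fun x : ℝ => Real.exp (-x) * (2 + x) + x) := by
      fun_prop
    apply monotoneOn_of_deriv_nonneg (convex_Ici 0) hf.continuous.continuousOn
      hf.differentiableOn
    intro x hx
    simp only [interior_Ici, Set.mem_Ioi] at hx
    have hd : deriv (fun x : ℝ => Real.exp (-x) * (2 + x) + x) x
        = -Real.exp (-x) * (2 + x) + Real.exp (-x) * 1 + 1 := by
      have h1 : HasDerivAt (fun x : ℝ => Real.exp (-x) * (2 + x) + x)
          (-Real.exp (-x) * (2 + x) + Real.exp (-x) * 1 + 1) x := by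
        have he : HasDerivAt (fun x : ℝ => Real.exp (-x)) (-Real.exp (-x)) x := by
          simpa [Function.comp_def] using (Real.hasDerivAt_exp (-x)).comp x ((hasDerivAt_id x).neg)
        have h3 := ((he.mul ((hasDerivAt_const x (2:ℝ)).add (hasDerivAt_id x))).add
          (hasDerivAt_id x))
        have h4 : ((fun x : ℝ => Real.exp (-x)) * ((fun _ : ℝ => (2:ℝ)) + id) + id)
            = fun x : ℝ => Real.exp (-x) * (2 + x) + x := by
          funext y; simp
        rw [h4] at h3
        exact h3.congr_deriv (by simp only [Pi.add_apply, id_eq]; ring)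
      exact h1.deriv
    rw [hd]
    have h2 : (1 + x) * Real.exp (-x) ≤ 1 := by
      have := Real.add_one_le_exp x
      have hpos := Real.exp_pos (-x)
      have hmul : (1 + x) * Real.exp (-x) ≤ Real.exp x * Real.exp (-x) := by
        nlinarith [Real.exp_pos (-x)]
      rwa [← Real.exp_add, add_neg_cancel, Real.exp_zero] at hmul
    nlinarith [Real.exp_pos (-x)]
  intro x hx
  have := hmono (Set.self_mem_Ici) hx hx
  simp only [neg_zero, Real.exp_zero] at this
  nlinarith

theorem sigmoid_offset_sector :
    ∀ ν : ℝ,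
      ((1 / 2 - 1 / (1 + Real.exp (-ν))) - 0 * (0 - ν)) *
        ((1 / 4) * (0 - ν) - (1 / 2 - 1 / (1 + Real.exp (-ν)))) ≥ 0 := by
  intro ν
  have ht : 0 < Real.exp (-ν) := Real.exp_pos _
  have hs : 0 < 1 + Real.exp (-ν) := by linarith
  set t := Real.exp (-ν) with htdef
  set s : ℝ := 1 / (1 + t) with hsdef
  have hseq : s * (1 + t) = 1 := by rw [hsdef]; field_simp
  rcases le_total 0 ν with hν | hν
  · -- t ≤ 1, key gives 2 - ν ≤ t*(2+ν)
    have hk := sigmoid_key ν hν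
    have ht1 : t ≤ 1 := by
      rw [htdef]
      calc Real.exp (-ν) ≤ Real.exp 0 := Real.exp_le_exp.mpr (by linarith)
        _ = 1 := Real.exp_zero
    have ha : 1 / 2 - s ≤ 0 := by
      nlinarith [hseq]
    have hb : (1 / 4) * (0 - ν) - (1 / 2 - s) ≤ 0 := by
      have h2 : 2 - ν ≤ t * (2 + ν) := hk
      nlinarith [hseq, hs]
    nlinarith
  · -- ν ≤ 0
    have hk := sigmoid_key (-ν) (by linarith)
    have hinv : Real.exp (- -ν) * t = 1 := by
      rw [htdef, ← Real.exp_add]; simp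
    have ht1 : 1 ≤ t := by
      rw [htdef]
      calc (1:ℝ) = Real.exp 0 := (Real.exp_zero).symm
        _ ≤ Real.exp (-ν) := Real.exp_le_exp.mpr (by linarith)
    have ha : 0 ≤ 1 / 2 - s := by
      nlinarith [hseq]
    have hkey2 : t * (2 + ν) ≤ 2 - ν := by
      have he : 0 < Real.exp (- -ν) := Real.exp_pos _
      nlinarith [hk, hinv, he]
    have hb : 0 ≤ (1 / 4) * (0 - ν) - (1 / 2 - s) := by
      nlinarith [hseq, hs, hkey2]
    nlinarith
end

section
/- Let P ≻ 0 be symmetric n×n, Λ ≻ 0 diagonal m×m, A_cl ∈ ℝ^{n×n}, B_cl ∈ ℝ^{n×m}, N ∈ ℝ^{m×n}, L ∈ ℝ^{m×m}. The block matrix [[P, 0, A_clᵀ, Nᵀ],[0, Λ, B_clᵀ, Lᵀ],[A_cl, B_cl, P⁻¹, 0],[N, L, 0, Λ⁻¹]] is positive definite if and only if [[A_clᵀPA_cl − P, A_clᵀPB_cl],[B_clᵀPA_cl, B_clᵀPB_cl]] + [[NᵀΛN, NᵀΛL],[LᵀΛN, LᵀΛL]] − [[0,0],[0,Λ]] ≺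 0. -/
open Matrix

open scoped ComplexOrder in
theorem posDef_fromBlocks₂₂' {m n : Type*} [Fintype m] [Fintype n] [DecidableEq n]
    (A : Matrix m m ℝ) (B : Matrix m n ℝ) {D : Matrix n n ℝ} (hD : D.PosDef) [Invertible D] :
    (Matrix.fromBlocks A B Bᴴ D).PosDef ↔ (A - B * D⁻¹ * Bᴴ).PosDef := by
  rw [Matrix.posDef_iff_dotProduct_mulVec, Matrix.posDef_iff_dotProduct_mulVec, Matrix.IsHermitian.fromBlocks₂₂ _ _ hD.1]
  constructor
  · rintro ⟨h1, h2⟩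
    refine ⟨h1, fun x hx => ?_⟩
    have hv : (Sum.elim x (-((D⁻¹ * Bᴴ) *ᵥ x)) : m ⊕ n → ℝ) ≠ 0 := by
      intro h0
      exact hx (funext fun i => congrFun h0 (Sum.inl i))
    have := h2 hv
    rw [dotProduct_mulVec, Matrix.schur_complement_eq₂₂ A B x _ hD.1, add_neg_cancel,
      dotProduct_zero, zero_add] at this
    rwa [dotProduct_mulVec]
  · rintro ⟨h1, h2⟩
    refine ⟨h1, fun v hv => ?_⟩
    rw [dotProduct_mulVec, ← Sum.elim_comp_inl_inr v,
      Matrix.schur_complement_eq₂₂ A B _ _ hD.1]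
    by_cases hx : v ∘ Sum.inl = 0
    · have hy : v ∘ Sum.inr ≠ 0 := by
        intro hy
        apply hv
        rw [← Sum.elim_comp_inl_inr v, hx, hy]
        ext (i | i) <;> rfl
      have hw : (D⁻¹ * Bᴴ) *ᵥ (v ∘ Sum.inl) + v ∘ Sum.inr ≠ 0 := by
        simpa [hx] using hy
      have h3 := (Matrix.posDef_iff_dotProduct_mulVec.mp hD).2 hw
      have h4 : (0:ℝ) ≤ star (v ∘ Sum.inl) ⬝ᵥ (A - B * D⁻¹ * Bᴴ) *ᵥ (v ∘ Sum.inl) := by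
        simp [hx]
      rw [dotProduct_mulVec] at h3 h4
      linarith
    · have h3 := (Matrix.posSemidef_iff_dotProduct_mulVec.mp hD.posSemidef).2 ((D⁻¹ * Bᴴ) *ᵥ (v ∘ Sum.inl) + v ∘ Sum.inr)
      have h4 := h2 hx
      rw [dotProduct_mulVec] at h3 h4
      linarith

theorem schur_equivalence_stability_LMI
    {n m : ℕ}
    (P : Matrix (Fin n) (Fin n) ℝ) (Λ : Matrix (Fin m) (Fin m) ℝ)
    (Acl : Matrix (Fin n) (Fin n) ℝ) (Bcl : Matrix (Fin n) (Fin m) ℝ)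
    (N : Matrix (Fin m) (Fin n) ℝ) (L : Matrix (Fin m) (Fin m) ℝ)
    (hP : P.PosDef) (hΛ : Λ.PosDef)
    (hΛdiag : ∃ dvec : Fin m → ℝ, Λ = Matrix.diagonal dvec) :
    (Matrix.fromBlocks
        (Matrix.fromBlocks P 0 0 Λ)
        (Matrix.fromBlocks Aclᵀ Nᵀ Bclᵀ Lᵀ)
        (Matrix.fromBlocks Acl Bcl N L)
        (Matrix.fromBlocks P⁻¹ 0 0 Λ⁻¹)).PosDef ↔
    (-(Matrix.fromBlocks (Aclᵀ * P * Acl - P) (Aclᵀ * P * Bcl)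
          (Bclᵀ * P * Acl) (Bclᵀ * P * Bcl) +
        Matrix.fromBlocks (Nᵀ * Λ * N) (Nᵀ * Λ * L) (Lᵀ * Λ * N) (Lᵀ * Λ * L) -
        Matrix.fromBlocks 0 0 0 Λ)).PosDef := by
  haveI : Invertible P := hP.isUnit.invertible
  haveI : Invertible Λ := hΛ.isUnit.invertible
  haveI : Invertible P⁻¹ := hP.inv.isUnit.invertible
  haveI : Invertible Λ⁻¹ := hΛ.inv.isUnit.invertible
  haveI : Invertible (Matrix.fromBlocks P⁻¹ 0 0 (Λ⁻¹ : Matrix (Fin m) (Fin m) ℝ)) :=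
    Matrix.fromBlocksZero₂₁Invertible P⁻¹ 0 Λ⁻¹
  have hD : (Matrix.fromBlocks P⁻¹ 0 0 (Λ⁻¹ : Matrix (Fin m) (Fin m) ℝ)).PosDef := by
    have := (posDef_fromBlocks₂₂' P⁻¹ (0 : Matrix (Fin n) (Fin m) ℝ) hΛ.inv).mpr
    simpa using this (by simpa using hP.inv)
  have hDinv : (Matrix.fromBlocks P⁻¹ 0 0 (Λ⁻¹ : Matrix (Fin m) (Fin m) ℝ))⁻¹ =
      Matrix.fromBlocks P 0 0 Λ := by
    apply Matrix.inv_eq_right_inv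
    simp [Matrix.fromBlocks_multiply, ← Matrix.fromBlocks_one,
      Matrix.nonsing_inv_mul _ (Matrix.isUnit_iff_isUnit_det _ |>.mp hP.isUnit),
      Matrix.nonsing_inv_mul _ (Matrix.isUnit_iff_isUnit_det _ |>.mp hΛ.isUnit)]
  have hC : (Matrix.fromBlocks Acl Bcl N L) = (Matrix.fromBlocks Aclᵀ Nᵀ Bclᵀ Lᵀ)ᴴ := by
    simp [Matrix.conjTranspose_eq_transpose_of_trivial, Matrix.fromBlocks_transpose]
  rw [hC, posDef_fromBlocks₂₂' _ _ hD]
  have key : Matrix.fromBlocks P 0 0 Λ -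
      (Matrix.fromBlocks Aclᵀ Nᵀ Bclᵀ Lᵀ) *
        (Matrix.fromBlocks P⁻¹ 0 0 (Λ⁻¹ : Matrix (Fin m) (Fin m) ℝ))⁻¹ *
        (Matrix.fromBlocks Aclᵀ Nᵀ Bclᵀ Lᵀ)ᴴ =
      -(Matrix.fromBlocks (Aclᵀ * P * Acl - P) (Aclᵀ * P * Bcl)
          (Bclᵀ * P * Acl) (Bclᵀ * P * Bcl) +
        Matrix.fromBlocks (Nᵀ * Λ * N) (Nᵀ * Λ * L) (Lᵀ * Λ * N) (Lᵀ * Λ * L) -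
        Matrix.fromBlocks 0 0 0 Λ) := by
    rw [hDinv, ← hC]
    simp only [sub_eq_add_neg, Matrix.fromBlocks_multiply, Matrix.fromBlocks_add,
      Matrix.fromBlocks_neg, Matrix.mul_zero, Matrix.zero_mul, add_zero, zero_add, neg_zero,
      neg_add_rev, neg_neg]
    abel
  rw [key]
end

section
/- Suppose there exists a symmetric positive definite P ∈ ℝ^{n×n}, a diagonal Λ ⪰ 0, and the matrix inequality R_Vᵀ [[AᵀPA − P, AᵀPB],[BᵀPA, BᵀPB]] R_V + R_φᵀ [[Λ, 0],[0, −Λ]] R_φ ≺ 0 holds, where R_V = [[I, 0],[N_ux, N_uz]], R_φ = [[N_vx, N_vz],[0, I]]. Then for every x and z satisfying the normalized sector condition vᵀΛv − zᵀΛz ≥ 0 with v = N_vx x + N_vz z, the state update x⁺ = A x + B(N_ux x + N_uz z) satisfies x⁺ᵀ P x⁺ < xᵀ P x whenever (x, z) ≠ 0. -/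
open Matrix

lemma quad_congr {ι κ : Type*} [Fintype ι] [Fintype κ]
    (M : Matrix ι ι ℝ) (R : Matrix ι κ ℝ) (w : κ → ℝ) :
    w ⬝ᵥ (Rᵀ * M * R).mulVec w = (R.mulVec w) ⬝ᵥ M.mulVec (R.mulVec w) := by
  rw [← Matrix.mulVec_mulVec, ← Matrix.mulVec_mulVec, Matrix.dotProduct_mulVec,
    Matrix.vecMul_transpose]

lemma dotP_trans {ι κ κ' : Type*} [Fintype ι] [Fintype κ] [Fintype κ']
    (C : Matrix ι κ ℝ) (M : Matrix ι κ' ℝ) (c : κ → ℝ) (d : κ' → ℝ) :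
    c ⬝ᵥ (Cᵀ * M).mulVec d = (C.mulVec c) ⬝ᵥ M.mulVec d := by
  rw [← Matrix.mulVec_mulVec, Matrix.dotProduct_mulVec, Matrix.vecMul_transpose]

lemma block_quad {a b : ℕ} (E : Matrix (Fin a) (Fin a) ℝ) (F : Matrix (Fin a) (Fin b) ℝ)
    (G : Matrix (Fin b) (Fin a) ℝ) (H : Matrix (Fin b) (Fin b) ℝ)
    (p : Fin a → ℝ) (q : Fin b → ℝ) :
    (Sum.elim p q) ⬝ᵥ (Matrix.fromBlocks E F G H).mulVec (Sum.elim p q)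
      = p ⬝ᵥ E.mulVec p + p ⬝ᵥ F.mulVec q + q ⬝ᵥ G.mulVec p + q ⬝ᵥ H.mulVec q := by
  rw [Matrix.fromBlocks_mulVec, sumElim_dotProduct_sumElim]
  simp [dotProduct_add]
  ring

theorem lyapunov_decrease_nn_system
    {n nu m : ℕ}
    (P : Matrix (Fin n) (Fin n) ℝ) (Λ : Matrix (Fin m) (Fin m) ℝ)
    (A : Matrix (Fin n) (Fin n) ℝ) (B : Matrix (Fin n) (Fin nu) ℝ)
    (Nux : Matrix (Fin nu) (Fin n) ℝ) (Nuz : Matrix (Fin nu) (Fin m) ℝ)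
    (Nvx : Matrix (Fin m) (Fin n) ℝ) (Nvz : Matrix (Fin m) (Fin m) ℝ)
    (hP : P.PosDef)
    (hΛdiag : ∃ dvec : Fin m → ℝ, Λ = Matrix.diagonal dvec)
    (hΛ : Λ.PosSemidef)
    (RV : Matrix (Fin n ⊕ Fin nu) (Fin n ⊕ Fin m) ℝ)
    (Rφ : Matrix (Fin m ⊕ Fin m) (Fin n ⊕ Fin m) ℝ)
    (hRV : RV = Matrix.fromBlocks 1 0 Nux Nuz)
    (hRφ : Rφ = Matrix.fromBlocks Nvx Nvz 0 1)
    (hLMI : (-(RVᵀ *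
        Matrix.fromBlocks (Aᵀ * P * A - P) (Aᵀ * P * B) (Bᵀ * P * A) (Bᵀ * P * B) * RV +
        Rφᵀ * Matrix.fromBlocks Λ 0 0 (-Λ) * Rφ)).PosDef) :
    ∀ (x : Fin n → ℝ) (z : Fin m → ℝ),
      (Nvx.mulVec x + Nvz.mulVec z) ⬝ᵥ Λ.mulVec (Nvx.mulVec x + Nvz.mulVec z) -
          z ⬝ᵥ Λ.mulVec z ≥ 0 →
      ¬(x = 0 ∧ z = 0) →
      (A.mulVec x + B.mulVec (Nux.mulVec x + Nuz.mulVec z)) ⬝ᵥ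
          P.mulVec (A.mulVec x + B.mulVec (Nux.mulVec x + Nuz.mulVec z)) <
        x ⬝ᵥ P.mulVec x := by
  intro x z hsec hne
  set u : Fin nu → ℝ := Nux.mulVec x + Nuz.mulVec z with hu
  set v : Fin m → ℝ := Nvx.mulVec x + Nvz.mulVec z with hv
  set w : Fin n ⊕ Fin m → ℝ := Sum.elim x z with hw
  have hwne : w ≠ 0 := by
    intro h
    apply hne
    constructor
    · funext i; exact congrFun h (Sum.inl i)
    · funext i; exact congrFun h (Sum.inr i)
  have hpos := hLMI.dotProduct_mulVec_pos hwne
  simp only [star_trivial] at hpos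
  rw [Matrix.neg_mulVec, dotProduct_neg] at hpos
  have hneg : w ⬝ᵥ ((RVᵀ *
        Matrix.fromBlocks (Aᵀ * P * A - P) (Aᵀ * P * B) (Bᵀ * P * A) (Bᵀ * P * B) * RV +
        Rφᵀ * Matrix.fromBlocks Λ 0 0 (-Λ) * Rφ)).mulVec w < 0 := by linarith
  rw [Matrix.add_mulVec, dotProduct_add, quad_congr, quad_congr] at hneg
  have hRVw : RV.mulVec w = Sum.elim x u := by
    rw [hRV, hw, Matrix.fromBlocks_mulVec]
    simp [hu]
  have hRφw : Rφ.mulVec w = Sum.elim v z := by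
    rw [hRφ, hw, Matrix.fromBlocks_mulVec]
    simp [hv]
  rw [hRVw, hRφw, block_quad, block_quad] at hneg
  have h2 : v ⬝ᵥ Λ.mulVec v + v ⬝ᵥ (0 : Matrix (Fin m) (Fin m) ℝ).mulVec z
      + z ⬝ᵥ (0 : Matrix (Fin m) (Fin m) ℝ).mulVec v + z ⬝ᵥ (-Λ).mulVec z
      = v ⬝ᵥ Λ.mulVec v - z ⬝ᵥ Λ.mulVec z := by
    simp [Matrix.neg_mulVec, dotProduct_neg]
    ring
  rw [h2] at hneg
  have key : x ⬝ᵥ (Aᵀ * P * A - P).mulVec x + x ⬝ᵥ (Aᵀ * P * B).mulVec u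
        + u ⬝ᵥ (Bᵀ * P * A).mulVec x + u ⬝ᵥ (Bᵀ * P * B).mulVec u
      = (A.mulVec x + B.mulVec u) ⬝ᵥ P.mulVec (A.mulVec x + B.mulVec u)
        - x ⬝ᵥ P.mulVec x := by
    have h1 : x ⬝ᵥ (Aᵀ * P * A).mulVec x = (A.mulVec x) ⬝ᵥ P.mulVec (A.mulVec x) := by
      rw [Matrix.mul_assoc, dotP_trans, ← Matrix.mulVec_mulVec]
    have h2' : x ⬝ᵥ (Aᵀ * P * B).mulVec u = (A.mulVec x) ⬝ᵥ P.mulVec (B.mulVec u) := by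
      rw [Matrix.mul_assoc, dotP_trans, ← Matrix.mulVec_mulVec]
    have h3 : u ⬝ᵥ (Bᵀ * P * A).mulVec x = (B.mulVec u) ⬝ᵥ P.mulVec (A.mulVec x) := by
      rw [Matrix.mul_assoc, dotP_trans, ← Matrix.mulVec_mulVec]
    have h4 : u ⬝ᵥ (Bᵀ * P * B).mulVec u = (B.mulVec u) ⬝ᵥ P.mulVec (B.mulVec u) := by
      rw [Matrix.mul_assoc, dotP_trans, ← Matrix.mulVec_mulVec]
    rw [Matrix.sub_mulVec, dotProduct_sub, h1, h2', h3, h4]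
    simp [Matrix.mulVec_add, dotProduct_add, add_dotProduct]
    ring
  rw [key] at hneg
  linarith
end
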